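/- For every even integer n ≥ 8, the minimum cluster deletion cost satisfies OPT_CD(G_n) = n/2, and this cost is attained by the clique partition whose parts are {v_1, …, v_{n/2}} and the singletons {u_1}, …, {u_{n/2}}. -/

import Mathlib

open scoped Classical

namespace CD

variable {V : Type*}

/-- An open wedge, encoded as a pair `(p, k)` where `p = s(i,j)` is the unordered pair of
endpoint vertices and `k` is the center: `{i,k}` and `{j,k}` are edges and `{i,j}` is not.
Using an unordered pair identifies the wedges `(i,j,k)` and `(j,i,k)`. -/
def IsOpenWedge (G : SimpleGraph V) (w : Sym2 V × V) : Prop :=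
  ∃ i j : V, w.1 = s(i, j) ∧ i ≠ j ∧ G.Adj i w.2 ∧ G.Adj j w.2 ∧ ¬ G.Adj i j

/-- The two edges of a wedge `(s(i,j), k)`, namely `s(i,k)` and `s(j,k)`. -/
def wedgeEdges (w : Sym2 V × V) : Set (Sym2 V) :=
  {e | ∃ x ∈ w.1, e = s(x, w.2)}

/-- The set of open wedges of `G`. -/
def wedgeSet (G : SimpleGraph V) : Set (Sym2 V × V) := {w | IsOpenWedge G w}

/-- `E_W ⊆ E` is an STC labeling if every open wedge has one of its two edges in `E_W`. -/
def IsSTCLabeling (G : SimpleGraph V) (EW : Set (Sym2 V)) : Prop :=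
  EW ⊆ G.edgeSet ∧
  ∀ i j k : V, i ≠ j → G.Adj i k → G.Adj j k → ¬ G.Adj i j →
    s(i, k) ∈ EW ∨ s(j, k) ∈ EW

/-- Minimum size of an STC labeling of `G`. -/
noncomputable def MinSTC (G : SimpleGraph V) : ℕ :=
  sInf {c | ∃ EW : Set (Sym2 V), IsSTCLabeling G EW ∧ EW.ncard = c}

variable [Fintype V] [DecidableEq V]

/-- A clique partition: a partition of the vertex set all of whose parts are cliques in `G`. -/
def IsCliquePartition (G : SimpleGraph V) (C : Finpartition (Finset.univ : Finset V)) : Prop :=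
  ∀ P ∈ C.parts, G.IsClique (P : Set V)

/-- An edge crosses the partition iff no part contains both of its endpoints
(equivalently, its endpoints lie in different parts). -/
def Crosses (C : Finpartition (Finset.univ : Finset V)) (e : Sym2 V) : Prop :=
  ¬ ∃ P ∈ C.parts, ∀ x ∈ e, x ∈ P

/-- The cost of a partition: the number of edges of `G` crossing it. -/
noncomputable def cost (G : SimpleGraph V) (C : Finpartition (Finset.univ : Finset V)) : ℕ :=
  {e | e ∈ G.edgeSet ∧ Crosses C e}.ncard

/-- Optimal cluster deletion value: the minimum cost of a clique partition of `G`. -/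
noncomputable def OPTCD (G : SimpleGraph V) : ℕ :=
  sInf {c | ∃ C : Finpartition (Finset.univ : Finset V), IsCliquePartition G C ∧ cost G C = c}

/-- `B_k(G)`: edges `{i,j} ∈ E` with `i, j ≠ k`, `{i,k} ∈ E` and `{j,k} ∉ E`. -/
def Bset (G : SimpleGraph V) (k : V) : Set (Sym2 V) :=
  {e | ∃ i j : V, e = s(i, j) ∧ G.Adj i j ∧ j ≠ k ∧ G.Adj i k ∧ ¬ G.Adj j k}

/-- `N_k(G)`: unordered pairs `{i,j}` of distinct vertices with `{i,k}, {j,k} ∈ E`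
and `{i,j} ∉ E`. -/
def Nset (G : SimpleGraph V) (k : V) : Set (Sym2 V) :=
  {e | ∃ i j : V, e = s(i, j) ∧ i ≠ j ∧ ¬ G.Adj i j ∧ G.Adj i k ∧ G.Adj j k}

/-- Feasibility for the STC LP relaxation: variables are nonnegative on edges and for every
open wedge `(i,j,k)` centered at `k` we have `x_{ik} + x_{jk} ≥ 1`. -/
def LPFeasible (G : SimpleGraph V) (x : Sym2 V → ℚ) : Prop :=
  (∀ e ∈ G.edgeSet, 0 ≤ x e) ∧
  ∀ i j k : V, i ≠ j → G.Adj i k → G.Adj j k → ¬ G.Adj i j →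
    1 ≤ x s(i, k) + x s(j, k)

/-- A solution is half-integral if every edge variable lies in `{0, 1/2, 1}`. -/
def HalfIntegral (G : SimpleGraph V) (x : Sym2 V → ℚ) : Prop :=
  ∀ e ∈ G.edgeSet, x e = 0 ∨ x e = 1 / 2 ∨ x e = 1

/-- Feasibility for the program (IP2): binary variables `y_e, z_e` on edges, and for every
open wedge `(i,j,k)` centered at `k`, `z_{ik} ≤ y_{jk}` and `z_{jk} ≤ y_{ik}`. -/
def IP2Feasible (G : SimpleGraph V) (y z : Sym2 V → ℚ) : Prop :=
  (∀ e ∈ G.edgeSet, (y e = 0 ∨ y e = 1) ∧ (z e = 0 ∨ z e = 1)) ∧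
  ∀ i j k : V, i ≠ j → G.Adj i k → G.Adj j k → ¬ G.Adj i j →
    z s(i, k) ≤ y s(j, k) ∧ z s(j, k) ≤ y s(i, k)

/-- Cyclic successor on `Fin m` (i.e. `i + 1` modulo `m`). -/
def fnext {m : ℕ} (i : Fin m) : Fin m := i + ⟨1 % m, Nat.mod_lt 1 i.pos⟩

/-- Cyclic predecessor on `Fin m` (i.e. `i - 1` modulo `m`). -/
def fprev {m : ℕ} (i : Fin m) : Fin m := i - ⟨1 % m, Nat.mod_lt 1 i.pos⟩

/-- The graph `G_n` (with `m = n/2`): vertices `Sum.inl i = vᵢ` and `Sum.inr i = uᵢ`;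
the `vᵢ` form a clique and each `uᵢ` is pendant, adjacent only to `vᵢ`. -/
def Gn (m : ℕ) : SimpleGraph (Fin m ⊕ Fin m) :=
  SimpleGraph.fromRel (fun a b =>
    match a, b with
    | Sum.inl _, Sum.inl _ => True
    | Sum.inl i, Sum.inr j => i = j
    | _, _ => False)

/-- The parts of the canonical clique partition of `G_n`:
the clique `{v₁, …, v_{n/2}}` together with the singletons `{uⱼ}`. -/
def Pstar (m : ℕ) : Finset (Finset (Fin m ⊕ Fin m)) :=
  insert ((Finset.univ : Finset (Fin m)).image Sum.inl)
    ((Finset.univ : Finset (Fin m)).image (fun j => {Sum.inr j}))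

/-- The wedge set `W_n = { (vᵢ, u_{i+1}, v_{i+1}) : i }`, each wedge centered at `v_{i+1}`,
indices taken modulo `m = n/2`. -/
def Wn (m : ℕ) : Set (Sym2 (Fin m ⊕ Fin m) × (Fin m ⊕ Fin m)) :=
  {w | ∃ i : Fin m, w = (s(Sum.inl i, Sum.inr (fnext i)), Sum.inl (fnext i))}

/-- The pendant edges `{uᵢ, vᵢ}` together with the cycle edges `{vᵢ, v_{i+1}}`
(indices modulo `m = n/2`). -/
def EWn (m : ℕ) : Set (Sym2 (Fin m ⊕ Fin m)) :=
  {e | ∃ i : Fin m, e = s(Sum.inr i, Sum.inl i)} ∪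
  {e | ∃ i : Fin m, e = s(Sum.inl i, Sum.inl (fnext i))}


section Proof

variable {m : ℕ}

lemma Gn_adj_ll (i j : Fin m) : (Gn m).Adj (Sum.inl i) (Sum.inl j) ↔ i ≠ j := by
  simp [Gn]

lemma Gn_adj_lr (i j : Fin m) : (Gn m).Adj (Sum.inl i) (Sum.inr j) ↔ i = j := by
  constructor
  · rintro ⟨hne, h | h⟩
    · exact h
    · exact h.elim
  · rintro rfl
    exact ⟨by simp, Or.inl rfl⟩

lemma Gn_adj_rl (i j : Fin m) : (Gn m).Adj (Sum.inr i) (Sum.inl j) ↔ j = i := by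
  rw [SimpleGraph.adj_comm, Gn_adj_lr]

lemma Gn_adj_rr (i j : Fin m) : ¬ (Gn m).Adj (Sum.inr i) (Sum.inr j) := by
  rintro ⟨hne, h | h⟩ <;> exact h

lemma fnext_val (hm : 2 ≤ m) (i : Fin m) : (fnext i).val = (i.val + 1) % m := by
  simp [fnext, Fin.add_def, Nat.mod_eq_of_lt (show 1 < m by omega)]

lemma fnext_ne (hm : 2 ≤ m) (i : Fin m) : fnext i ≠ i := by
  have h := fnext_val hm i
  intro he
  rw [he] at h
  rcases Nat.lt_or_ge (i.val + 1) m with h' | h'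
  · rw [Nat.mod_eq_of_lt h'] at h; omega
  · have hiv : i.val + 1 = m := by have := i.isLt; omega
    rw [hiv, Nat.mod_self] at h
    omega

lemma fnext_fnext_ne (hm : 3 ≤ m) (i : Fin m) : fnext (fnext i) ≠ i := by
  have h1 := fnext_val (by omega) i
  have h2 := fnext_val (by omega) (fnext i)
  rw [h1] at h2
  intro he
  rw [he] at h2
  have hi := i.isLt
  rcases Nat.lt_or_ge (i.val + 1) m with h' | h'
  · rw [Nat.mod_eq_of_lt h'] at h2
    rcases Nat.lt_or_ge (i.val + 1 + 1) m with h'' | h''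
    · rw [Nat.mod_eq_of_lt h''] at h2; omega
    · have hiv : i.val + 2 = m ∨ i.val + 2 = m + 1 := by omega
      rcases hiv with hiv | hiv
      · have : i.val + 1 + 1 = m := by omega
        rw [this, Nat.mod_self] at h2; omega
      · omega
  · have hiv : i.val + 1 = m := by omega
    rw [hiv, Nat.mod_self] at h2
    simp [Nat.mod_eq_of_lt (show 1 < m by omega)] at h2
    omega

/-- The canonical clique partition as a `Finpartition`. -/
def Cstar (m : ℕ) (hm : 0 < m) : Finpartition (Finset.univ : Finset (Fin m ⊕ Fin m)) where
  parts := Pstar m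
  supIndep := by
    rw [Finset.supIndep_iff_pairwiseDisjoint]
    intro P hP Q hQ hPQ
    simp only [Pstar, Finset.coe_insert, Set.mem_insert_iff, Finset.mem_coe,
      Finset.mem_image, Finset.mem_univ, true_and] at hP hQ
    rcases hP with rfl | ⟨j, rfl⟩ <;> rcases hQ with rfl | ⟨k, rfl⟩
    · exact absurd rfl hPQ
    · simp [Function.onFun, Finset.disjoint_left]
    · simp [Function.onFun, Finset.disjoint_left]
    · have hjk : Sum.inr j ≠ (Sum.inr k : Fin m ⊕ Fin m) := by
        intro h; exact hPQ (by rw [h])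
      simp [Function.onFun, Finset.disjoint_left, hjk]
  sup_parts := by
    apply Finset.eq_univ_of_forall
    intro x
    rw [Finset.mem_sup]
    rcases x with i | j
    · exact ⟨_, Finset.mem_insert_self _ _, by simp⟩
    · refine ⟨{Sum.inr j}, ?_, by simp⟩
      exact Finset.mem_insert_of_mem (Finset.mem_image.mpr ⟨j, Finset.mem_univ _, rfl⟩)
  bot_notMem := by
    simp only [Finset.bot_eq_empty, Pstar, Finset.mem_insert, Finset.mem_image,
      Finset.mem_univ, true_and]
    push_neg
    constructor
    · intro h
      have : (Sum.inl (⟨0, hm⟩ : Fin m) : Fin m ⊕ Fin m) ∈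
          (Finset.univ : Finset (Fin m)).image Sum.inl := by simp
      rw [← h] at this
      simp at this
    · intro j
      exact Finset.singleton_nonempty _

lemma Cstar_parts (hm : 0 < m) : (Cstar m hm).parts = Pstar m := rfl

lemma cliquePartition_Cstar (hm : 0 < m) : IsCliquePartition (Gn m) (Cstar m hm) := by
  intro P hP
  simp only [Cstar_parts, Pstar, Finset.mem_insert, Finset.mem_image,
    Finset.mem_univ, true_and] at hP
  rcases hP with rfl | ⟨j, rfl⟩
  · intro a ha b hb hab
    simp only [Finset.coe_image, Finset.coe_univ, Set.image_univ, Set.mem_range] at ha hb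
    obtain ⟨i, rfl⟩ := ha
    obtain ⟨k, rfl⟩ := hb
    exact (Gn_adj_ll i k).mpr (fun h => hab (by rw [h]))
  · simp only [Finset.coe_singleton]
    exact Set.pairwise_singleton _ _

lemma crossSet_Cstar (hm : 0 < m) :
    {e | e ∈ (Gn m).edgeSet ∧ Crosses (Cstar m hm) e} =
      Set.range (fun i : Fin m => s(Sum.inr i, Sum.inl i)) := by
  apply Set.eq_of_subset_of_subset
  · intro e
    induction e using Sym2.ind with
    | _ a b =>
      rintro ⟨he, hc⟩
      rw [SimpleGraph.mem_edgeSet] at he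
      rcases a with i | i <;> rcases b with j | j
      · exfalso
        apply hc
        refine ⟨(Finset.univ : Finset (Fin m)).image Sum.inl, Finset.mem_insert_self _ _, ?_⟩
        intro x hx
        rw [Sym2.mem_iff] at hx
        rcases hx with rfl | rfl <;> simp
      · have hij : i = j := (Gn_adj_lr i j).mp he
        subst hij
        exact ⟨i, (Sym2.eq_swap).symm⟩
      · have hij : j = i := (Gn_adj_rl i j).mp he
        subst hij
        exact ⟨j, rfl⟩
      · exact (Gn_adj_rr i j he).elim
  · rintro e ⟨i, rfl⟩
    constructor
    · rw [SimpleGraph.mem_edgeSet, Gn_adj_rl]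
    · rintro ⟨Q, hQ, hall⟩
      have h1 : (Sum.inr i : Fin m ⊕ Fin m) ∈ Q := hall _ (Sym2.mem_mk_left _ _)
      have h2 : (Sum.inl i : Fin m ⊕ Fin m) ∈ Q := hall _ (Sym2.mem_mk_right _ _)
      simp only [Cstar_parts, Pstar, Finset.mem_insert, Finset.mem_image,
        Finset.mem_univ, true_and] at hQ
      rcases hQ with rfl | ⟨j, rfl⟩
      · simp at h1
      · simp at h2

lemma ncard_range_pendant :
    (Set.range (fun i : Fin m => s(Sum.inr i, Sum.inl i))).ncard = m := by
  have hinj : Function.Injective (fun i : Fin m => s(Sum.inr i, Sum.inl i)) := by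
    intro i j h
    simp only [Sym2.eq, Sym2.rel_iff', Prod.mk.injEq, Sum.inr.injEq, Sum.inl.injEq,
      Prod.swap_prod_mk] at h
    rcases h with ⟨h, -⟩ | ⟨h, -⟩
    · exact h
    · exact (Sum.inr_ne_inl h).elim
  rw [← Set.image_univ, ← Finset.coe_univ, ← Finset.coe_image, Set.ncard_coe_finset,
    Finset.card_image_of_injective _ hinj, Finset.card_univ, Fintype.card_fin]

lemma cost_Cstar (hm : 0 < m) : cost (Gn m) (Cstar m hm) = m := by
  rw [cost, crossSet_Cstar, ncard_range_pendant]

lemma lower_bound (hm : 4 ≤ m) (C : Finpartition (Finset.univ : Finset (Fin m ⊕ Fin m)))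
    (hC : IsCliquePartition (Gn m) C) : m ≤ cost (Gn m) C := by
  classical
  set g : Fin m → Sym2 (Fin m ⊕ Fin m) := fun i =>
    if ∃ P ∈ C.parts, Sum.inr i ∈ P ∧ Sum.inl i ∈ P then
      s(Sum.inl i, Sum.inl (fnext i))
    else s(Sum.inr i, Sum.inl i) with hg
  have hrange : ∀ i, g i ∈ {e | e ∈ (Gn m).edgeSet ∧ Crosses C e} := by
    intro i
    by_cases h : ∃ P ∈ C.parts, Sum.inr i ∈ P ∧ Sum.inl i ∈ P
    · rw [hg]
      simp only [if_pos h]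
      obtain ⟨P, hP, hui, hvi⟩ := h
      have hne : i ≠ fnext i := (fnext_ne (by omega) i).symm
      constructor
      · rw [SimpleGraph.mem_edgeSet]
        exact (Gn_adj_ll _ _).mpr hne
      · rintro ⟨Q, hQ, hall⟩
        have hvQ : (Sum.inl i : Fin m ⊕ Fin m) ∈ Q := hall _ (Sym2.mem_mk_left _ _)
        have hQP : Q = P := C.eq_of_mem_parts hQ hP hvQ hvi
        have hnext : (Sum.inl (fnext i) : Fin m ⊕ Fin m) ∈ P := by
          rw [← hQP]; exact hall _ (Sym2.mem_mk_right _ _)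
        have hclique := hC P hP
        have hadj := hclique (Finset.mem_coe.mpr hui) (Finset.mem_coe.mpr hnext)
          (by simp)
        rw [Gn_adj_rl] at hadj
        exact (fnext_ne (by omega) i) hadj
    · rw [hg]
      simp only [if_neg h]
      constructor
      · rw [SimpleGraph.mem_edgeSet, Gn_adj_rl]
      · rintro ⟨Q, hQ, hall⟩
        exact h ⟨Q, hQ, hall _ (Sym2.mem_mk_left _ _), hall _ (Sym2.mem_mk_right _ _)⟩
  have hinj : Function.Injective g := by
    intro i j hij
    simp only [hg] at hij
    by_cases hi : ∃ P ∈ C.parts, Sum.inr i ∈ P ∧ Sum.inl i ∈ P <;>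
      by_cases hj : ∃ P ∈ C.parts, Sum.inr j ∈ P ∧ Sum.inl j ∈ P
    · rw [if_pos hi, if_pos hj] at hij
      simp only [Sym2.eq, Sym2.rel_iff', Prod.mk.injEq, Sum.inl.injEq,
        Prod.swap_prod_mk] at hij
      rcases hij with ⟨h1, h2⟩ | ⟨h1, h2⟩
      · exact h1
      · exfalso
        apply fnext_fnext_ne (by omega : 3 ≤ m) j
        rw [← h1, h2]
    · rw [if_pos hi, if_neg hj] at hij
      simp only [Sym2.eq, Sym2.rel_iff', Prod.mk.injEq, Prod.swap_prod_mk] at hij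
      simp at hij
    · rw [if_neg hi, if_pos hj] at hij
      simp only [Sym2.eq, Sym2.rel_iff', Prod.mk.injEq, Prod.swap_prod_mk] at hij
      simp at hij
    · rw [if_neg hi, if_neg hj] at hij
      simp only [Sym2.eq, Sym2.rel_iff', Prod.mk.injEq, Sum.inl.injEq, Sum.inr.injEq,
        Prod.swap_prod_mk] at hij
      rcases hij with ⟨-, h⟩ | ⟨h, -⟩
      · exact h
      · exact (Sum.inr_ne_inl h).elim
  have hsub : Set.range g ⊆ {e | e ∈ (Gn m).edgeSet ∧ Crosses C e} :=
    Set.range_subset_iff.mpr hrange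
  have hcard : (Set.range g).ncard = m := by
    rw [← Set.image_univ, ← Finset.coe_univ, ← Finset.coe_image, Set.ncard_coe_finset,
      Finset.card_image_of_injective _ hinj, Finset.card_univ, Fintype.card_fin]
  calc m = (Set.range g).ncard := hcard.symm
    _ ≤ {e | e ∈ (Gn m).edgeSet ∧ Crosses C e}.ncard :=
        Set.ncard_le_ncard hsub (Set.toFinite _)
    _ = cost (Gn m) C := rfl

end Proof

theorem statement_8 (n : ℕ) (hn : Even n) (h8 : 8 ≤ n) :
    OPTCD (Gn (n / 2)) = n / 2 ∧
    ∃ C : Finpartition (Finset.univ : Finset (Fin (n / 2) ⊕ Fin (n / 2))),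
      C.parts = Pstar (n / 2) ∧ IsCliquePartition (Gn (n / 2)) C ∧
      cost (Gn (n / 2)) C = n / 2 := by
  have hm4 : 4 ≤ n / 2 := by omega
  have hm0 : 0 < n / 2 := by omega
  have hmem : (n / 2) ∈ {c | ∃ C : Finpartition (Finset.univ : Finset (Fin (n/2) ⊕ Fin (n/2))),
      IsCliquePartition (Gn (n/2)) C ∧ cost (Gn (n/2)) C = c} :=
    ⟨Cstar (n/2) hm0, cliquePartition_Cstar hm0, cost_Cstar hm0⟩
  refine ⟨le_antisymm (Nat.sInf_le hmem) ?_,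
    Cstar (n/2) hm0, rfl, cliquePartition_Cstar hm0, cost_Cstar hm0⟩
  apply le_csInf ⟨_, hmem⟩
  rintro c ⟨C, hC, rfl⟩
  exact lower_bound hm4 C hC


end CD
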